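/- The affine Coxeter group of type Ã₂, G = ⟨a, b, c | a² = b² = c² = 1, (ab)³ = (bc)³ = (ac)³ = 1⟩, cannot be generated by two reflections; equivalently its Coxeter rank is 3. -/

import Mathlib

/-- The Coxeter matrix of the affine Coxeter group of type `Ã₂`,
`⟨a, b, c | a² = b² = c² = 1, (ab)³ = (bc)³ = (ac)³ = 1⟩`. -/
def coxMatrixAffineA2 : CoxeterMatrix (Fin 3) where
  M := !![1, 3, 3; 3, 1, 3; 3, 3, 1]
  off_diagonal := by
    intro i i' h
    fin_cases i <;> fin_cases i' <;> simp_all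

open scoped commutatorElement

section Aux

/-- Three involutive matrices over `ZMod 3` satisfying the `Ã₂` Coxeter relations. -/
def affA2mat : Fin 3 → Matrix (Fin 3) (Fin 3) (ZMod 3)
  | 0 => !![2, 1, 0; 0, 1, 0; 0, 0, 1]
  | 1 => !![1, 0, 0; 1, 2, 0; 0, 0, 1]
  | 2 => !![0, 2, 1; 2, 0, 1; 0, 0, 1]

lemma affA2mat_mul_self (i : Fin 3) : affA2mat i * affA2mat i = 1 := by
  fin_cases i <;> decide

/-- The matrices as units. -/
def affA2unit (i : Fin 3) : (Matrix (Fin 3) (Fin 3) (ZMod 3))ˣ :=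
  ⟨affA2mat i, affA2mat i, affA2mat_mul_self i, affA2mat_mul_self i⟩

lemma affA2_liftable : coxMatrixAffineA2.IsLiftable affA2unit := by
  intro i j
  apply Units.ext
  show ((affA2unit i * affA2unit j) ^ coxMatrixAffineA2.M i j : _ˣ).val = 1
  fin_cases i <;> fin_cases j <;>
    simp only [Units.val_pow_eq_pow_val, Units.val_mul, affA2unit, coxMatrixAffineA2] <;>
    decide

/-- The lifted homomorphism to matrices. -/
noncomputable def affA2rep : coxMatrixAffineA2.Group →* (Matrix (Fin 3) (Fin 3) (ZMod 3))ˣ :=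
  coxMatrixAffineA2.toCoxeterSystem.lift ⟨affA2unit, affA2_liftable⟩

lemma affA2rep_simple (i : Fin 3) :
    affA2rep (coxMatrixAffineA2.toCoxeterSystem.simple i) = affA2unit i :=
  CoxeterSystem.lift_apply_simple _ affA2_liftable i

/-- In a group generated by two involutions, every commutator is a power of the
product of the two involutions. -/
lemma commutator_mem_zpowers_of_closure_pair {G : Type*} [Group G] {x y : G}
    (hx : x * x = 1) (hy : y * y = 1) (hcl : Subgroup.closure {x, y} = ⊤)
    (g h : G) : ⁅g, h⁆ ∈ Subgroup.zpowers (x * y) := by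
  have hxi : x⁻¹ = x := inv_eq_of_mul_eq_one_right hx
  have hyi : y⁻¹ = y := inv_eq_of_mul_eq_one_right hy
  have hconj : ∀ n : ℤ, x * (x * y) ^ n * x = (x * y) ^ (-n) := by
    intro n
    have h1 : x * (x * y) * x⁻¹ = (x * y)⁻¹ := by
      rw [hxi]
      calc x * (x * y) * x = (x * x) * (y * x) := by group
        _ = y * x := by rw [hx, one_mul]
        _ = (x * y)⁻¹ := by rw [mul_inv_rev, hxi, hyi]
    calc x * (x * y) ^ n * x = x * (x * y) ^ n * x⁻¹ := by rw [hxi]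
      _ = (x * (x * y) * x⁻¹) ^ n := by rw [conj_zpow]
      _ = ((x * y)⁻¹) ^ n := by rw [h1]
      _ = (x * y) ^ (-n) := by rw [inv_zpow, zpow_neg]
  have hinvol : ∀ p : ℤ, (x * (x * y) ^ p)⁻¹ = x * (x * y) ^ p := by
    intro p
    apply inv_eq_of_mul_eq_one_right
    calc (x * (x * y) ^ p) * (x * (x * y) ^ p)
        = (x * (x * y) ^ p * x) * (x * y) ^ p := by group
      _ = (x * y) ^ (-p) * (x * y) ^ p := by rw [hconj]
      _ = 1 := by rw [← zpow_add, neg_add_cancel, zpow_zero]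
  -- the "dihedral" subgroup
  let K : Subgroup G :=
    { carrier := {g | ∃ n : ℤ, g = (x * y) ^ n ∨ g = x * (x * y) ^ n}
      one_mem' := ⟨0, Or.inl (by simp)⟩
      mul_mem' := by
        rintro a b ⟨m, hm | hm⟩ ⟨n, hn | hn⟩ <;> subst hm <;> subst hn
        · exact ⟨m + n, Or.inl (by rw [zpow_add]) ⟩
        · refine ⟨n - m, Or.inr ?_⟩
          calc (x * y) ^ m * (x * (x * y) ^ n)
              = x * (x * (x * y) ^ m * x) * (x * y) ^ n := by
                rw [← mul_assoc, ← mul_assoc, ← mul_assoc, hx, one_mul]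
            _ = x * (x * y) ^ (-m) * (x * y) ^ n := by rw [hconj]
            _ = x * (x * y) ^ (n - m) := by rw [mul_assoc, ← zpow_add, neg_add_eq_sub]
        · exact ⟨m + n, Or.inr (by rw [zpow_add, mul_assoc])⟩
        · refine ⟨n - m, Or.inl ?_⟩
          calc x * (x * y) ^ m * (x * (x * y) ^ n)
              = (x * (x * y) ^ m * x) * (x * y) ^ n := by group
            _ = (x * y) ^ (-m) * (x * y) ^ n := by rw [hconj]
            _ = (x * y) ^ (n - m) := by rw [← zpow_add, neg_add_eq_sub]
      inv_mem' := by
        rintro a ⟨m, hm | hm⟩ <;> subst hm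
        · exact ⟨-m, Or.inl (by rw [zpow_neg])⟩
        · exact ⟨m, Or.inr (hinvol m)⟩ }
  have hxK : x ∈ K := ⟨0, Or.inr (by simp)⟩
  have hyK : y ∈ K := ⟨1, Or.inr (by rw [zpow_one, ← mul_assoc, hx, one_mul])⟩
  have htop : ∀ g : G, g ∈ K := by
    intro g
    have : (⊤ : Subgroup G) ≤ K := by
      rw [← hcl]
      exact Subgroup.closure_le K |>.2 (by rintro z (rfl | rfl) <;> assumption)
    exact this (Subgroup.mem_top g)
  -- now compute the commutator
  rw [Subgroup.mem_zpowers_iff]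
  have e1 : ∀ p q : ℤ, (x * (x * y) ^ p) * (x * (x * y) ^ q) = (x * y) ^ (q - p) := by
    intro p q
    calc (x * (x * y) ^ p) * (x * (x * y) ^ q)
        = (x * (x * y) ^ p * x) * (x * y) ^ q := by group
      _ = (x * y) ^ (-p) * (x * y) ^ q := by rw [hconj]
      _ = (x * y) ^ (q - p) := by rw [← zpow_add, neg_add_eq_sub]
  obtain ⟨m, hg | hg⟩ := htop g <;> obtain ⟨n, hh | hh⟩ := htop h <;> subst hg <;> subst hh
  · refine ⟨0, ?_⟩
    rw [zpow_zero]
    exact (commutatorElement_eq_one_iff_commute.2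
      (Commute.zpow_zpow (Commute.refl _) m n)).symm
  · refine ⟨2 * m, Eq.symm ?_⟩
    calc ⁅(x * y) ^ m, x * (x * y) ^ n⁆
        = (x * y) ^ m * (x * ((x * y) ^ n * (x * y) ^ (-m))) * (x * (x * y) ^ n) := by
          rw [commutatorElement_def, hinvol]; group
      _ = (x * y) ^ m * ((x * (x * y) ^ (n + -m)) * (x * (x * y) ^ n)) := by
          rw [← zpow_add, mul_assoc]
      _ = (x * y) ^ m * (x * y) ^ (n - (n + -m)) := by rw [e1]
      _ = (x * y) ^ (2 * m) := by rw [← zpow_add]; congr 1; ring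
  · refine ⟨-(2 * n), Eq.symm ?_⟩
    calc ⁅x * (x * y) ^ m, (x * y) ^ n⁆
        = (x * ((x * y) ^ m * (x * y) ^ n)) * (x * ((x * y) ^ m * (x * y) ^ (-n))) := by
          rw [commutatorElement_def, hinvol]; group
      _ = (x * (x * y) ^ (m + n)) * (x * (x * y) ^ (m + -n)) := by
          rw [← zpow_add, ← zpow_add]
      _ = (x * y) ^ ((m + -n) - (m + n)) := by rw [e1]
      _ = (x * y) ^ (-(2 * n)) := by congr 1; ring
  · refine ⟨2 * n - 2 * m, Eq.symm ?_⟩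
    calc ⁅x * (x * y) ^ m, x * (x * y) ^ n⁆
        = ((x * (x * y) ^ m) * (x * (x * y) ^ n)) *
            ((x * (x * y) ^ m) * (x * (x * y) ^ n)) := by
          rw [commutatorElement_def, hinvol, hinvol]; group
      _ = (x * y) ^ (n - m) * (x * y) ^ (n - m) := by rw [e1]
      _ = (x * y) ^ (2 * n - 2 * m) := by rw [← zpow_add]; congr 1; ring

end Aux

/-- The affine Coxeter group of type `Ã₂` cannot be generated by two reflections;
equivalently, its Coxeter rank is 3. -/
theorem affineA2_rank_three :
    (¬ ∃ t₁ t₂ : coxMatrixAffineA2.Group,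
        coxMatrixAffineA2.toCoxeterSystem.IsReflection t₁ ∧
        coxMatrixAffineA2.toCoxeterSystem.IsReflection t₂ ∧
        Subgroup.closure {t₁, t₂} = ⊤) ∧
    IsLeast {k : ℕ | ∃ S : Finset coxMatrixAffineA2.Group,
      (∀ g ∈ S, coxMatrixAffineA2.toCoxeterSystem.IsReflection g) ∧
      Subgroup.closure (S : Set coxMatrixAffineA2.Group) = ⊤ ∧ S.card = k} 3 := by
  set cs := coxMatrixAffineA2.toCoxeterSystem
  -- the double commutator of simple reflections is nontrivial
  have hdouble : ⁅⁅cs.simple 0, cs.simple 1⁆, ⁅cs.simple 1, cs.simple 2⁆⁆ ≠ 1 := by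
    intro h
    have := congrArg affA2rep h
    rw [map_commutatorElement, map_commutatorElement, map_commutatorElement,
      affA2rep_simple, affA2rep_simple, affA2rep_simple, map_one] at this
    have hval := congrArg Units.val this
    simp only [commutatorElement_def, Units.val_mul, Units.val_one] at hval
    revert hval
    show ¬ _
    simp only [affA2unit, Units.inv_mk]
    decide
  have main : ¬ ∃ t₁ t₂ : coxMatrixAffineA2.Group,
      cs.IsReflection t₁ ∧ cs.IsReflection t₂ ∧ Subgroup.closure {t₁, t₂} = ⊤ := by
    rintro ⟨t₁, t₂, h₁, h₂, hcl⟩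
    obtain ⟨m, hm⟩ := commutator_mem_zpowers_of_closure_pair h₁.mul_self h₂.mul_self hcl
      (cs.simple 0) (cs.simple 1)
    obtain ⟨n, hn⟩ := commutator_mem_zpowers_of_closure_pair h₁.mul_self h₂.mul_self hcl
      (cs.simple 1) (cs.simple 2)
    apply hdouble
    rw [← hm, ← hn]
    exact commutatorElement_eq_one_iff_commute.2 (Commute.zpow_zpow (Commute.refl _) m n)
  letI : DecidableEq coxMatrixAffineA2.Group := Classical.decEq _
  refine ⟨main, ?_, ?_⟩
  · -- 3 is achieved by the simple reflections
    refine ⟨{cs.simple 0, cs.simple 1, cs.simple 2}, ?_, ?_, ?_⟩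
    · intro g hg
      simp only [Finset.mem_insert, Finset.mem_singleton] at hg
      rcases hg with rfl | rfl | rfl <;> exact cs.isReflection_simple _
    · have : ({cs.simple 0, cs.simple 1, cs.simple 2} : Set coxMatrixAffineA2.Group)
          = Set.range cs.simple := by
        ext g
        constructor
        · rintro (rfl | rfl | rfl) <;> exact ⟨_, rfl⟩
        · rintro ⟨i, rfl⟩
          fin_cases i
          · exact Or.inl rfl
          · exact Or.inr (Or.inl rfl)
          · exact Or.inr (Or.inr rfl)
      rw [show ((({cs.simple 0, cs.simple 1, cs.simple 2} : Finset coxMatrixAffineA2.Group)) :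
          Set coxMatrixAffineA2.Group) = {cs.simple 0, cs.simple 1, cs.simple 2} by
        simp, this]
      exact cs.subgroup_closure_range_simple
    · -- the simple reflections are distinct (via the matrix representation)
      have hinj : ∀ i j : Fin 3, cs.simple i = cs.simple j → i = j := by
        intro i j hij
        have := congrArg affA2rep hij
        rw [affA2rep_simple, affA2rep_simple] at this
        have hval := congrArg Units.val this
        simp only [affA2unit] at hval
        fin_cases i <;> fin_cases j <;> first | rfl | (exfalso; revert hval; decide)
      rw [Finset.card_insert_of_notMem, Finset.card_insert_of_notMem,
        Finset.card_singleton]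
      · simp only [Finset.mem_singleton]
        intro h; exact (by decide : (1 : Fin 3) ≠ 2) (hinj 1 2 h)
      · simp only [Finset.mem_insert, Finset.mem_singleton]
        rintro (h | h)
        · exact (by decide : (0 : Fin 3) ≠ 1) (hinj 0 1 h)
        · exact (by decide : (0 : Fin 3) ≠ 2) (hinj 0 2 h)
  · -- lower bound
    rintro k ⟨S, hrefl, hcl, rfl⟩
    by_contra hlt
    push_neg at hlt
    have hle : S.card ≤ 2 := by omega
    have : ∃ t₁ t₂ : coxMatrixAffineA2.Group,
        cs.IsReflection t₁ ∧ cs.IsReflection t₂ ∧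
        (S : Set coxMatrixAffineA2.Group) ⊆ {t₁, t₂} := by
      interval_cases h : S.card
      · rw [Finset.card_eq_zero] at h
        subst h
        exact ⟨cs.simple 0, cs.simple 0, cs.isReflection_simple 0,
          cs.isReflection_simple 0, by simp⟩
      · obtain ⟨a, rfl⟩ := Finset.card_eq_one.mp h
        exact ⟨a, a, hrefl a (by simp), hrefl a (by simp), by simp⟩
      · obtain ⟨a, b, -, rfl⟩ := Finset.card_eq_two.mp h
        exact ⟨a, b, hrefl a (by simp), hrefl b (by simp), by simp⟩
    obtain ⟨t₁, t₂, h₁, h₂, hsub⟩ := this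
    refine main ⟨t₁, t₂, h₁, h₂, ?_⟩
    have := Subgroup.closure_mono hsub
    rw [hcl] at this
    exact top_le_iff.mp this
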